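/- Let k ≥ 2, let a_1, a_2 ∈ ℂ^k be orthonormal vectors and let s = a_1 ⊗ a_2 + a_2 ⊗ a_1 ∈ ℂ^k ⊗ ℂ^k. Then for every real ε with 0 ≤ ε ≤ 1/2, the matrix B = P_sym^{k,2} − ε·s s^* has Schmidt number at most 2, i.e. B can be written as a finite sum Σ_j w_j w_j^* with each w_j ∈ ℂ^{k²} of Schmidt rank at most 2. -/

import Mathlib

open Matrix Finset

/-- The flip operator on ℂ^k ⊗ ℂ^k. -/
noncomputable def flipOp (k : ℕ) : Matrix (Fin k × Fin k) (Fin k × Fin k) ℂ :=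
  Matrix.of fun p q => if p.1 = q.2 ∧ p.2 = q.1 then 1 else 0

/-- Orthogonal projection onto the symmetric subspace of ℂ^k ⊗ ℂ^k. -/
noncomputable def psym (k : ℕ) : Matrix (Fin k × Fin k) (Fin k × Fin k) ℂ :=
  (1 / 2 : ℂ) • (1 + flipOp k)

/-- Schmidt rank of a vector in ℂ^k ⊗ ℂ^k: the rank of the associated k × k matrix. -/
noncomputable def schmidtRank {k : ℕ} (w : Fin k × Fin k → ℂ) : ℕ :=
  (Matrix.of fun i j => w (i, j) : Matrix (Fin k) (Fin k) ℂ).rank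

lemma sum_bi {k : ℕ} (b : OrthonormalBasis (Fin k) ℂ (EuclideanSpace ℂ (Fin k))) (x y : Fin k) :
    ∑ i, b i x * star (b i y) = if x = y then (1:ℂ) else 0 := by
  have h := b.sum_inner_mul_inner (EuclideanSpace.single x (1:ℂ)) (EuclideanSpace.single y (1:ℂ))
  simp [EuclideanSpace.inner_single_left, EuclideanSpace.inner_single_right,
    EuclideanSpace.single_apply] at h
  simpa [eq_comm] using h

lemma factor_aux {k : ℕ} (F G : Fin k → ℂ) :
    ∑ ij : Fin k × Fin k, F ij.1 * G ij.2 = (∑ i, F i) * (∑ j, G j) := by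
  rw [Fintype.sum_mul_sum, Fintype.sum_prod_type]

lemma psym_decomp {k : ℕ} (b : OrthonormalBasis (Fin k) ℂ (EuclideanSpace ℂ (Fin k)))
    (p q : Fin k × Fin k) :
    ∑ ij : Fin k × Fin k,
      ((b ij.1 p.1 * b ij.2 p.2 + b ij.2 p.1 * b ij.1 p.2) *
        star (b ij.1 q.1 * b ij.2 q.2 + b ij.2 q.1 * b ij.1 q.2))
      = 4 * psym k p q := by
  have hsummand : ∀ ij : Fin k × Fin k,
      ((b ij.1 p.1 * b ij.2 p.2 + b ij.2 p.1 * b ij.1 p.2) *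
        star (b ij.1 q.1 * b ij.2 q.2 + b ij.2 q.1 * b ij.1 q.2))
      = (b ij.1 p.1 * star (b ij.1 q.1)) * (b ij.2 p.2 * star (b ij.2 q.2))
      + (b ij.1 p.1 * star (b ij.1 q.2)) * (b ij.2 p.2 * star (b ij.2 q.1))
      + (b ij.1 p.2 * star (b ij.1 q.1)) * (b ij.2 p.1 * star (b ij.2 q.2))
      + (b ij.1 p.2 * star (b ij.1 q.2)) * (b ij.2 p.1 * star (b ij.2 q.1)) := by
    intro ij
    simp only [star_add, star_mul']
    ring
  rw [Finset.sum_congr rfl (fun ij _ => hsummand ij)]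
  rw [Finset.sum_add_distrib, Finset.sum_add_distrib, Finset.sum_add_distrib,
    factor_aux (fun i => b i p.1 * star (b i q.1)) (fun j => b j p.2 * star (b j q.2)),
    factor_aux (fun i => b i p.1 * star (b i q.2)) (fun j => b j p.2 * star (b j q.1)),
    factor_aux (fun i => b i p.2 * star (b i q.1)) (fun j => b j p.1 * star (b j q.2)),
    factor_aux (fun i => b i p.2 * star (b i q.2)) (fun j => b j p.1 * star (b j q.1))]
  simp only [sum_bi b]
  simp only [psym, flipOp, Matrix.smul_apply, Matrix.add_apply, Matrix.one_apply,
    Matrix.of_apply, smul_eq_mul, Prod.ext_iff]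
  split_ifs <;> first | tauto | norm_num

lemma rank_aux {k : ℕ} (c : ℂ) (x y : Fin k → ℂ) :
    (Matrix.of fun i j => c * (x i * y j + y i * x j) : Matrix (Fin k) (Fin k) ℂ).rank ≤ 2 := by
  have hfac : (Matrix.of fun i j => c * (x i * y j + y i * x j) : Matrix (Fin k) (Fin k) ℂ)
      = (Matrix.of fun i (t : Fin 2) => if t = 0 then c * x i else c * y i) *
        (Matrix.of fun (t : Fin 2) j => if t = 0 then y j else x j) := by
    ext i j
    simp [Matrix.mul_apply, Fin.sum_univ_two]
    ring
  rw [hfac]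
  calc ((Matrix.of fun i (t : Fin 2) => if t = 0 then c * x i else c * y i) *
        (Matrix.of fun (t : Fin 2) j => if t = 0 then y j else x j)).rank
      ≤ (Matrix.of fun i (t : Fin 2) => if t = 0 then c * x i else c * y i).rank :=
        Matrix.rank_mul_le_left _ _
    _ ≤ Fintype.card (Fin 2) := Matrix.rank_le_card_width _
    _ = 2 := by simp

lemma extend_basis (k : ℕ) (hk : 2 ≤ k)
    (a₁ a₂ : Fin k → ℂ)
    (ha₁ : ∑ i, Complex.normSq (a₁ i) = 1) (ha₂ : ∑ i, Complex.normSq (a₂ i) = 1)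
    (horth : ∑ i, star (a₁ i) * a₂ i = 0) :
    ∃ b : OrthonormalBasis (Fin k) ℂ (EuclideanSpace ℂ (Fin k)),
      (∀ x, b ⟨0, by omega⟩ x = a₁ x) ∧ (∀ x, b ⟨1, by omega⟩ x = a₂ x) := by
  set i0 : Fin k := ⟨0, by omega⟩ with hi0
  set i1 : Fin k := ⟨1, by omega⟩ with hi1
  have hne : i0 ≠ i1 := by simp [hi0, hi1, Fin.ext_iff]
  set toE : (Fin k → ℂ) → EuclideanSpace ℂ (Fin k) :=
    fun x => (WithLp.equiv 2 (Fin k → ℂ)).symm x with htoE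
  have hinner : ∀ x y : Fin k → ℂ,
      (inner ℂ (toE x) (toE y) : ℂ) = ∑ i, star (x i) * y i := by
    intro x y
    simp [PiLp.inner_apply, RCLike.inner_apply, htoE, mul_comm]
  have h11 : (inner ℂ (toE a₁) (toE a₁) : ℂ) = 1 := by
    rw [hinner]
    have : ∀ i, star (a₁ i) * a₁ i = (Complex.normSq (a₁ i) : ℂ) := fun i =>
      (Complex.normSq_eq_conj_mul_self).symm
    simp only [this]
    exact_mod_cast ha₁
  have h22 : (inner ℂ (toE a₂) (toE a₂) : ℂ) = 1 := by
    rw [hinner]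
    have : ∀ i, star (a₂ i) * a₂ i = (Complex.normSq (a₂ i) : ℂ) := fun i =>
      (Complex.normSq_eq_conj_mul_self).symm
    simp only [this]
    exact_mod_cast ha₂
  have h12 : (inner ℂ (toE a₁) (toE a₂) : ℂ) = 0 := by rw [hinner]; exact horth
  have h21 : (inner ℂ (toE a₂) (toE a₁) : ℂ) = 0 := by
    rw [hinner]
    have := congrArg star horth
    simpa [star_sum, mul_comm] using this
  set v : Fin k → EuclideanSpace ℂ (Fin k) := fun i => if i = i0 then toE a₁ else toE a₂ with hv
  have hON : Orthonormal ℂ (({i0, i1} : Set (Fin k)).restrict v) := by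
    rw [orthonormal_iff_ite]
    rintro ⟨i, hi⟩ ⟨j, hj⟩
    simp only [Set.mem_insert_iff, Set.mem_singleton_iff] at hi hj
    rcases hi with rfl | rfl <;> rcases hj with rfl | rfl <;>
      simp only [Set.restrict, Set.domRestrict, hv, Subtype.mk.injEq, hne, hne.symm, eq_self_iff_true, if_true,
        if_false, h11, h22, h12, h21]
  obtain ⟨b, hb⟩ := hON.exists_orthonormalBasis_extension_of_card_eq
    (by simp [finrank_euclideanSpace])
  refine ⟨b, fun x => ?_, fun x => ?_⟩
  · have h := hb i0 (by simp)
    rw [hv] at h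
    simp only [if_pos rfl] at h
    simpa [htoE] using congrArg (fun v : EuclideanSpace ℂ (Fin k) => v x) h
  · have h := hb i1 (by simp)
    rw [hv] at h
    simp only [if_neg hne.symm] at h
    simpa [htoE] using congrArg (fun v : EuclideanSpace ℂ (Fin k) => v x) h

theorem psym_minus_sym_pair_schmidt_number_le_two (k : ℕ) (hk : 2 ≤ k)
    (a₁ a₂ : Fin k → ℂ)
    (ha₁ : ∑ i, Complex.normSq (a₁ i) = 1) (ha₂ : ∑ i, Complex.normSq (a₂ i) = 1)
    (horth : ∑ i, star (a₁ i) * a₂ i = 0)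
    (s : Fin k × Fin k → ℂ) (hs : ∀ p, s p = a₁ p.1 * a₂ p.2 + a₂ p.1 * a₁ p.2)
    (ε : ℝ) (hε0 : 0 ≤ ε) (hε : ε ≤ 1 / 2) :
    ∃ (N : ℕ) (w : Fin N → Fin k × Fin k → ℂ),
      psym k - (ε : ℂ) • Matrix.vecMulVec s (star s)
          = ∑ j, Matrix.vecMulVec (w j) (star (w j)) ∧
      ∀ j, schmidtRank (w j) ≤ 2 := by
  obtain ⟨b, hb1, hb2⟩ := extend_basis k hk a₁ a₂ ha₁ ha₂ horth
  set i0 : Fin k := ⟨0, by omega⟩ with hi0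
  set i1 : Fin k := ⟨1, by omega⟩ with hi1
  set A : Fin k × Fin k := (i0, i1) with hA
  set B : Fin k × Fin k := (i1, i0) with hB
  have hAB : A ≠ B := by simp [hA, hB, Prod.ext_iff, hi0, hi1, Fin.ext_iff]
  set u : Fin k × Fin k → Fin k × Fin k → ℂ :=
    fun ij p => b ij.1 p.1 * b ij.2 p.2 + b ij.2 p.1 * b ij.1 p.2 with hu
  set c : Fin k × Fin k → ℝ :=
    fun ij => if ij = A ∨ ij = B then Real.sqrt (1 - 2*ε) / 2 else 1/2 with hc
  set w' : Fin k × Fin k → Fin k × Fin k → ℂ := fun ij p => (c ij : ℂ) * u ij p with hw'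
  have huA : ∀ p, u A p = s p := by
    intro p
    simp only [hu, hA, hb1, hb2, hs p]
  have huB : ∀ p, u B p = s p := by
    intro p
    simp only [hu, hB, hb1, hb2, hs p]
    ring
  refine ⟨k*k, fun j => w' (finProdFinEquiv.symm j), ?_, ?_⟩
  · have hsum : ∑ j : Fin (k*k),
        Matrix.vecMulVec (w' (finProdFinEquiv.symm j)) (star (w' (finProdFinEquiv.symm j)))
        = ∑ ij : Fin k × Fin k, Matrix.vecMulVec (w' ij) (star (w' ij)) :=
      Fintype.sum_equiv finProdFinEquiv.symm _ _ (fun j => rfl)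
    rw [hsum]
    ext p q
    simp only [Matrix.sub_apply, Matrix.smul_apply, Matrix.vecMulVec_apply, Matrix.sum_apply,
      Pi.star_apply, smul_eq_mul]
    have hcc : ∀ ij, w' ij p * star (w' ij q)
        = (1/4 : ℂ) * (u ij p * star (u ij q))
          - (if ij = A ∨ ij = B then ((ε:ℂ)/2) * (u ij p * star (u ij q)) else 0) := by
      intro ij
      have hstar : star (w' ij q) = (c ij : ℂ) * star (u ij q) := by
        rw [show w' ij q = (c ij : ℂ) * u ij q from rfl, star_mul', Complex.star_def,
          Complex.conj_ofReal]
      have hw'p : w' ij p = (c ij : ℂ) * u ij p := rfl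
      rw [hw'p, hstar]
      by_cases h : ij = A ∨ ij = B
      · rw [if_pos h]
        have hr : ((c ij : ℝ) : ℂ) * ((c ij : ℝ) : ℂ) = 1/4 - (ε:ℂ)/2 := by
          rw [← Complex.ofReal_mul, hc]
          simp only [if_pos h]
          rw [div_mul_div_comm, Real.mul_self_sqrt (by linarith)]
          push_cast
          ring
        calc (c ij : ℂ) * u ij p * ((c ij : ℂ) * star (u ij q))
            = ((c ij : ℂ) * (c ij : ℂ)) * (u ij p * star (u ij q)) := by ring
          _ = _ := by rw [hr]; ring
      · rw [if_neg h]
        have hr : ((c ij : ℝ) : ℂ) * ((c ij : ℝ) : ℂ) = 1/4 := by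
          rw [← Complex.ofReal_mul, hc]
          simp only [if_neg h]
          push_cast
          ring
        calc (c ij : ℂ) * u ij p * ((c ij : ℂ) * star (u ij q))
            = ((c ij : ℂ) * (c ij : ℂ)) * (u ij p * star (u ij q)) := by ring
          _ = _ := by rw [hr]; ring
    rw [Finset.sum_congr rfl (fun ij _ => hcc ij), Finset.sum_sub_distrib]
    have h1 : ∑ ij : Fin k × Fin k, (1/4 : ℂ) * (u ij p * star (u ij q)) = psym k p q := by
      rw [← Finset.mul_sum]
      have := psym_decomp b p q
      simp only [hu]
      rw [this]
      ring
    have hsplit : ∀ ij : Fin k × Fin k,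
        (if ij = A ∨ ij = B then ((ε:ℂ)/2) * (u ij p * star (u ij q)) else 0)
        = (if ij = A then ((ε:ℂ)/2) * (u ij p * star (u ij q)) else 0)
          + (if ij = B then ((ε:ℂ)/2) * (u ij p * star (u ij q)) else 0) := by
      intro ij
      by_cases h1 : ij = A
      · rw [if_pos (Or.inl h1), if_pos h1, if_neg (by rw [h1]; exact hAB), add_zero]
      · by_cases h2 : ij = B
        · rw [if_pos (Or.inr h2), if_neg h1, if_pos h2, zero_add]
        · rw [if_neg (by tauto), if_neg h1, if_neg h2, add_zero]
    have h2 : ∑ ij : Fin k × Fin k,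
        (if ij = A ∨ ij = B then ((ε:ℂ)/2) * (u ij p * star (u ij q)) else 0)
        = (ε:ℂ) * (s p * star (s q)) := by
      rw [Finset.sum_congr rfl (fun ij _ => hsplit ij), Finset.sum_add_distrib,
        Finset.sum_ite_eq' _ A, Finset.sum_ite_eq' _ B]
      simp [huA, huB]
      ring
    rw [h1, h2]
  · intro j
    set ij := finProdFinEquiv.symm j with hij
    have heq : (Matrix.of fun x y => w' ij (x, y) : Matrix (Fin k) (Fin k) ℂ)
        = Matrix.of fun x y => (c ij : ℂ) * ((fun z => b ij.1 z) x * (fun z => b ij.2 z) y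
            + (fun z => b ij.2 z) x * (fun z => b ij.1 z) y) := by
      ext x y
      simp [hw', hu]
    unfold schmidtRank
    rw [heq]
    exact rank_aux ((c ij : ℂ)) _ _
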